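/- For every integer N ≥ 4, C_N/N ≥ 2/5, i.e. (1 + L_{N−3})/N ≥ 2/5. -/

import Mathlib

/-- `Lseg n = Σ_{k=1}^{n} (−1)^{k+1} (2^{k−1}/k!) (n−k+1)`, the expected number of
transmissions in one slot from a fully occupied segment of `n` nodes (so `Lseg 0 = 0`). -/
noncomputable def Lseg (n : ℕ) : ℝ :=
  ∑ k ∈ Finset.Icc 1 n,
    (-1 : ℝ) ^ (k + 1) * (2 ^ (k - 1) / (Nat.factorial k : ℝ)) * ((n : ℝ) - (k : ℝ) + 1)

/-- `C_k = 1 + L_{k−3}`, the expected number of transmissions in one slot from a fully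
occupied circle of `k ≥ 3` nodes. -/
noncomputable def Ccirc (k : ℕ) : ℝ := 1 + Lseg (k - 3)


noncomputable def aa (k : ℕ) : ℝ := (-1 : ℝ) ^ (k + 1) * (2 ^ (k - 1) / (Nat.factorial k : ℝ))

noncomputable def SS (m : ℕ) : ℝ := ∑ k ∈ Finset.Icc 1 m, aa k

lemma SS_succ (m : ℕ) : SS (m + 1) = SS m + aa (m + 1) := by
  unfold SS
  rw [Finset.sum_Icc_succ_top (Nat.le_add_left 1 m)]

lemma SS1 : SS 1 = 1 := by norm_num [SS, aa, Finset.sum_Icc_succ_top, Nat.factorial]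
lemma SS2 : SS 2 = 0 := by norm_num [SS, aa, Finset.sum_Icc_succ_top, Nat.factorial]
lemma SS3 : SS 3 = 2/3 := by norm_num [SS, aa, Finset.sum_Icc_succ_top, Nat.factorial]
lemma SS4 : SS 4 = 1/3 := by norm_num [SS, aa, Finset.sum_Icc_succ_top, Nat.factorial]
lemma SS5 : SS 5 = 7/15 := by norm_num [SS, aa, Finset.sum_Icc_succ_top, Nat.factorial]
lemma SS6 : SS 6 = 19/45 := by norm_num [SS, aa, Finset.sum_Icc_succ_top, Nat.factorial]

lemma aa_odd {k : ℕ} (hk : Odd k) : 0 ≤ aa k := by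
  unfold aa
  have : (-1 : ℝ) ^ (k + 1) = 1 := (hk.add_one).neg_one_pow
  rw [this]
  positivity

lemma aa_pair {k : ℕ} (hk : Odd k) : 0 ≤ aa k + aa (k + 1) := by
  obtain ⟨j, rfl⟩ := hk
  unfold aa
  have h1 : (-1 : ℝ) ^ (2 * j + 1 + 1) = 1 := by
    rw [pow_succ, pow_succ, pow_mul]; norm_num
  have h2 : (-1 : ℝ) ^ (2 * j + 1 + 1 + 1) = -1 := by
    rw [pow_succ, pow_succ, pow_succ, pow_mul]; norm_num
  rw [h1, h2]
  have hsub1 : 2 * j + 1 - 1 = 2 * j := by omega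
  have hsub2 : 2 * j + 1 + 1 - 1 = 2 * j + 1 := by omega
  rw [hsub1, hsub2]
  have hfac : (Nat.factorial (2 * j + 1 + 1) : ℝ) = (2 * j + 2) * Nat.factorial (2 * j + 1) := by
    rw [show 2 * j + 1 + 1 = (2 * j + 1) + 1 from rfl, Nat.factorial_succ]
    push_cast; ring
  have hf1 : (0:ℝ) < Nat.factorial (2 * j + 1) := by positivity
  rw [hfac]
  have key : (2:ℝ)^(2*j+1) / ((2*(j:ℝ)+2) * Nat.factorial (2*j+1)) ≤ 2^(2*j) / (Nat.factorial (2*j+1) : ℝ) := by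
    rw [div_le_div_iff₀ (by positivity) hf1]
    have hp : (0:ℝ) ≤ 2^(2*j) := by positivity
    have hj : (0:ℝ) ≤ (j:ℝ) := Nat.cast_nonneg j
    have : (2:ℝ)^(2*j+1) = 2*2^(2*j) := by ring
    nlinarith [mul_nonneg (mul_nonneg hp hf1.le) hj]
  linarith

lemma Lseg0 : Lseg 0 = 0 := by simp [Lseg]

lemma Lseg_succ (n : ℕ) : Lseg (n + 1) = Lseg n + SS (n + 1) := by
  unfold Lseg SS aa
  have h1 : ∀ k ∈ Finset.Icc 1 (n+1),
      (-1:ℝ)^(k+1) * (2^(k-1)/(Nat.factorial k : ℝ)) * ((↑(n+1):ℝ) - k + 1)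
      = (-1:ℝ)^(k+1) * (2^(k-1)/(Nat.factorial k : ℝ)) * ((n:ℝ) - k + 1)
        + (-1:ℝ)^(k+1) * (2^(k-1)/(Nat.factorial k : ℝ)) := by
    intro k _; push_cast; ring
  rw [Finset.sum_congr rfl h1, Finset.sum_add_distrib,
      Finset.sum_Icc_succ_top (Nat.le_add_left 1 n)]
  push_cast
  ring

lemma SS_inv (m : ℕ) : 19/45 ≤ SS (m + 6) ∧ 19/45 ≤ SS (m + 6) + aa (m + 7) := by
  induction m with
  | zero =>
    constructor
    · rw [SS6]
    · have h7 : 0 ≤ aa 7 := aa_odd ⟨3, by norm_num⟩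
      rw [SS6]; linarith
  | succ m ih =>
    obtain ⟨ih1, ih2⟩ := ih
    have hS : SS (m + 1 + 6) = SS (m + 6) + aa (m + 7) := by
      rw [show m + 1 + 6 = (m + 6) + 1 from rfl, SS_succ]
    constructor
    · rw [hS]; exact ih2
    · rw [hS]
      rcases Nat.even_or_odd (m + 7) with he | ho
      · have ho8 : Odd (m + 1 + 7) := by
          rcases he with ⟨t, ht⟩; exact ⟨t, by omega⟩
        have := aa_odd ho8
        linarith
      · have hpair : 0 ≤ aa (m + 7) + aa (m + 7 + 1) := aa_pair ho
        have : m + 1 + 7 = m + 7 + 1 := by omega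
        rw [this]
        linarith

lemma SS_ge (m : ℕ) (hm : 5 ≤ m) : 2/5 ≤ SS m := by
  rcases Nat.lt_or_ge m 6 with h | h
  · have : m = 5 := by omega
    rw [this, SS5]; norm_num
  · obtain ⟨j, rfl⟩ : ∃ j, m = j + 6 := ⟨m - 6, by omega⟩
    have := (SS_inv j).1
    linarith

lemma key (n : ℕ) (hn : 1 ≤ n) : 2/5 * ((n : ℝ) + 3) ≤ 1 + Lseg n := by
  have L1 : Lseg 1 = 1 := by
    show Lseg (0+1) = 1
    rw [Lseg_succ, Lseg0, SS1]; norm_num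
  have L2 : Lseg 2 = 1 := by
    show Lseg (1+1) = 1
    rw [Lseg_succ, L1, SS2]; norm_num
  have L3 : Lseg 3 = 5/3 := by
    show Lseg (2+1) = 5/3
    rw [Lseg_succ, L2, SS3]; norm_num
  have L4 : Lseg 4 = 2 := by
    show Lseg (3+1) = 2
    rw [Lseg_succ, L3, SS4]; norm_num
  rcases Nat.lt_or_ge n 4 with h | h
  · interval_cases n
    · rw [L1]; norm_num
    · rw [L2]; norm_num
    · rw [L3]; norm_num
  · obtain ⟨j, rfl⟩ : ∃ j, n = j + 4 := ⟨n - 4, by omega⟩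
    clear hn h
    induction j with
    | zero => rw [show (0:ℕ)+4 = 4 from rfl, L4]; norm_num
    | succ j ih =>
      have hS : 2/5 ≤ SS (j + 4 + 1) := SS_ge _ (by omega)
      have hL : Lseg (j + 1 + 4) = Lseg (j + 4) + SS (j + 4 + 1) := by
        rw [show j + 1 + 4 = (j + 4) + 1 from rfl, Lseg_succ]
      rw [hL]
      push_cast
      push_cast at ih
      linarith

/-- For every `N ≥ 4`, `C_N / N ≥ 2/5`. -/
theorem Ccirc_div_ge (N : ℕ) (hN : 4 ≤ N) : Ccirc N / (N : ℝ) ≥ 2 / 5 := by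
  have hNpos : (0:ℝ) < N := by
    have : 0 < N := by omega
    exact_mod_cast this
  obtain ⟨n, rfl⟩ : ∃ n, N = n + 3 := ⟨N - 3, by omega⟩
  have hn : 1 ≤ n := by omega
  have hsub : n + 3 - 3 = n := by omega
  rw [Ccirc, hsub, ge_iff_le, le_div_iff₀ hNpos]
  have := key n hn
  push_cast
  linarith
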